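/- Let X be a real Banach space and let A, B ⊆ X be bounded, closed, convex sets containing at least two points. Then A^c = B^c if and only if A' = B'. -/

import Mathlib

open Metric Set Bornology

variable {X : Type*}

/-- `frad A x` is r(A,x) = sup of distances from x to points of A. -/
noncomputable def frad [NormedAddCommGroup X] (A : Set X) (x : X) : ℝ :=
  sSup ((fun a => dist x a) '' A)

/-- `rad A` is the (Chebyshev) radius r(A) = inf over x in the space of r(A,x). -/
noncomputable def rad [NormedAddCommGroup X] (A : Set X) : ℝ :=
  sInf (Set.range fun x => frad A x)

/-- `selfRad A` is the self-radius r(A,A) = inf over x ∈ A of r(A,x). -/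
noncomputable def selfRad [NormedAddCommGroup X] (A : Set X) : ℝ :=
  sInf ((fun x => frad A x) '' A)

/-- The ball intersection D' of D. -/
noncomputable def ballInt [NormedAddCommGroup X] (D : Set X) : Set X :=
  ⋂ x ∈ D, closedBall x (Metric.diam D)

/-- The ball hull D^c of D. -/
noncomputable def ballHull [NormedAddCommGroup X] (D : Set X) : Set X :=
  ⋂ x ∈ {y : X | D ⊆ closedBall y (Metric.diam D)}, closedBall x (Metric.diam D)

/-- A set is diametrically maximal (complete) if adjoining any outside point
increases the diameter. -/
def IsDM [NormedAddCommGroup X] (C : Set X) : Prop :=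
  ∀ x ∉ C, Metric.diam C < Metric.diam (insert x C)

/-- `C` is a completion of `D`: a diametrically maximal set containing `D`
with the same diameter. -/
def IsCompletion [NormedAddCommGroup X] (D C : Set X) : Prop :=
  IsDM C ∧ D ⊆ C ∧ Metric.diam C = Metric.diam D

set_option linter.unusedSectionVars false

section Aux
variable [NormedAddCommGroup X] [NormedSpace ℝ X]

lemma mem_ballInt_iff' {D : Set X} {y : X} :
    y ∈ ballInt D ↔ D ⊆ closedBall y (Metric.diam D) := by
  simp only [ballInt, mem_iInter, mem_closedBall, Set.subset_def]
  constructor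
  · intro h x hx; rw [dist_comm]; exact h x hx
  · intro h x hx; rw [dist_comm]; exact h x hx

lemma subset_ballInt_self' {D : Set X} (hD : IsBounded D) : D ⊆ ballInt D := by
  intro x hx
  exact mem_ballInt_iff'.2 fun z hz => mem_closedBall.2 (dist_le_diam_of_mem hD hz hx)

lemma subset_ballHull' {D : Set X} : D ⊆ ballHull D := by
  intro x hx
  simp only [ballHull, mem_iInter, mem_setOf_eq]
  intro y hy
  exact hy hx

lemma ballHull_subset_closedBall' {D : Set X} {y : X}
    (hy : D ⊆ closedBall y (Metric.diam D)) :
    ballHull D ⊆ closedBall y (Metric.diam D) := by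
  intro v hv
  simp only [ballHull, mem_iInter, mem_setOf_eq] at hv
  exact hv y hy

lemma diam_ballHull' {D : Set X} (hDb : IsBounded D) (hne : D.Nonempty) :
    Metric.diam (ballHull D) = Metric.diam D := by
  obtain ⟨x₀, hx₀⟩ := hne
  have hcov : ∀ x ∈ D, D ⊆ closedBall x (Metric.diam D) := fun x hx z hz =>
    mem_closedBall.2 (dist_le_diam_of_mem hDb hz hx)
  refine le_antisymm ?_ ?_
  · refine Metric.diam_le_of_forall_dist_le Metric.diam_nonneg ?_
    intro u hu v hv
    have hv' : D ⊆ closedBall v (Metric.diam D) := by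
      intro x hx
      have := ballHull_subset_closedBall' (hcov x hx) hv
      rw [mem_closedBall] at this ⊢
      rw [dist_comm]; exact this
    exact mem_closedBall.1 (ballHull_subset_closedBall' hv' hu)
  · exact Metric.diam_mono subset_ballHull'
      ((isBounded_closedBall).subset (ballHull_subset_closedBall' (hcov x₀ hx₀)))

lemma diam_le_diam_of_ballInt_eq' {A B : Set X}
    (hAb : IsBounded A) (hAnt : A.Nontrivial) (hBb : IsBounded B)
    (h : ballInt A = ballInt B) : Metric.diam B ≤ Metric.diam A := by
  set α := Metric.diam A with hα
  set β := Metric.diam B with hβ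
  by_contra hc
  push_neg at hc
  have hαpos : 0 < α := by
    obtain ⟨x, hx, y, hy, hxy⟩ := hAnt
    exact lt_of_lt_of_le (dist_pos.2 hxy) (dist_le_diam_of_mem hAb hx hy)
  set ε := min ((β - α) / 3) (α / 2) with hε
  have hεpos : 0 < ε := lt_min (by linarith) (by linarith)
  have hεle : ε ≤ (β - α) / 3 := min_le_left _ _
  have hεle2 : ε ≤ α / 2 := min_le_right _ _
  -- pick a near-diametral pair in A
  have : ∃ a ∈ A, ∃ a' ∈ A, α - ε < dist a a' := by
    by_contra hno
    push_neg at hno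
    have : α ≤ α - ε := Metric.diam_le_of_forall_dist_le (by linarith) hno
    linarith
  obtain ⟨a, ha, a', ha', had⟩ := this
  set d := dist a a' with hd
  have hdpos : 0 < d := by
    have : α / 2 ≤ α - ε := by linarith
    linarith
  set c : ℝ := (d + 2 * ε) / d with hc'
  set p := a' + c • (a - a') with hp
  have hpa' : dist p a' = d + 2 * ε := by
    rw [dist_eq_norm]
    have : p - a' = c • (a - a') := by rw [hp]; abel
    rw [this, norm_smul, Real.norm_eq_abs, abs_of_pos (by positivity)]
    rw [← dist_eq_norm, ← hd, hc']
    field_simp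
  have hpa : dist p a = 2 * ε := by
    rw [dist_eq_norm]
    have : p - a = (c - 1) • (a - a') := by
      rw [hp]
      rw [sub_smul, one_smul]
      abel
    rw [this, norm_smul, Real.norm_eq_abs]
    have hc1 : c - 1 = 2 * ε / d := by
      rw [hc']; field_simp; ring
    rw [hc1, abs_of_pos (by positivity), ← dist_eq_norm, ← hd]
    field_simp
  have hpnot : p ∉ ballInt A := by
    intro hmem
    have := mem_ballInt_iff'.1 hmem ha'
    rw [mem_closedBall, dist_comm, hpa'] at this
    linarith
  rw [h] at hpnot
  have : ∃ b ∈ B, β < dist b p := by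
    by_contra hno
    push_neg at hno
    exact hpnot (mem_ballInt_iff'.2 fun b hb => mem_closedBall.2 (hno b hb))
  obtain ⟨b, hb, hbp⟩ := this
  have hbA : b ∈ ballInt A := h ▸ subset_ballInt_self' hBb hb
  have hab : dist a b ≤ α := mem_closedBall.1 (mem_ballInt_iff'.1 hbA ha)
  have : dist b p ≤ dist b a + dist a p := dist_triangle b a p
  rw [dist_comm a p, hpa] at this
  rw [dist_comm] at hab
  linarith

end Aux

/-- A^c = B^c if and only if A' = B'. -/
theorem stmt14 [NormedAddCommGroup X] [NormedSpace ℝ X] [CompleteSpace X]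
    (A B : Set X)
    (hAb : IsBounded A) (hAcl : IsClosed A) (hAcv : Convex ℝ A) (hAnt : A.Nontrivial)
    (hBb : IsBounded B) (hBcl : IsClosed B) (hBcv : Convex ℝ B) (hBnt : B.Nontrivial) :
    ballHull A = ballHull B ↔ ballInt A = ballInt B := by
  constructor
  · intro h
    have hAne := hAnt.nonempty
    have hBne := hBnt.nonempty
    have hd : Metric.diam A = Metric.diam B := by
      rw [← diam_ballHull' hAb hAne, h, diam_ballHull' hBb hBne]
    ext y
    rw [mem_ballInt_iff', mem_ballInt_iff']
    constructor
    · intro hy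
      have h1 := ballHull_subset_closedBall' hy
      rw [h, hd] at h1
      exact subset_ballHull'.trans h1
    · intro hy
      have h1 := ballHull_subset_closedBall' hy
      rw [← h, ← hd] at h1
      exact subset_ballHull'.trans h1
  · intro h
    have hd : Metric.diam A = Metric.diam B :=
      le_antisymm (diam_le_diam_of_ballInt_eq' hBb hBnt hAb h.symm)
        (diam_le_diam_of_ballInt_eq' hAb hAnt hBb h)
    have key : ∀ D : Set X, ballHull D = ⋂ y ∈ ballInt D, closedBall y (Metric.diam D) := by
      intro D
      have hS : {y : X | D ⊆ closedBall y (Metric.diam D)} = ballInt D := by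
        ext y; rw [mem_ballInt_iff']; rfl
      rw [ballHull, hS]
    rw [key A, key B, h, hd]
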